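/- Let T be a tournament, let v_0, v_1, …, v_k (with k ≥ 1 and v_0 ≠ v_k) be the vertices of a shortest directed path from v_0 to v_k in T, and let (D_0, D_1, …, D_{k+1}) be the associated path decomposition. Then V(T) = D_0 ∪ D_1 ∪ ⋯ ∪ D_{k+1}. -/
import Mathlib


/-- A tournament on a vertex type `V`: for every two distinct vertices exactly one
of the two possible arcs is present, and there are no loops. -/
structure Tournament (V : Type) where
  arc : V → V → Prop
  asymm : ∀ u v, arc u v → ¬ arc v u
  total : ∀ u v, u ≠ v → arc u v ∨ arc v u

namespace Tournament

variable {V : Type}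

/-- A set of vertices is transitive (acyclic) if it contains no directed triangle. -/
def IsTransitiveSet (T : Tournament V) (S : Set V) : Prop :=
  ∀ a ∈ S, ∀ b ∈ S, ∀ c ∈ S, ¬ (T.arc a b ∧ T.arc b c ∧ T.arc c a)

/-- Out-neighborhood `N⁺(v)`. -/
def outN (T : Tournament V) (v : V) : Set V := {w | T.arc v w}

/-- In-neighborhood `N⁻(v)`. -/
def inN (T : Tournament V) (v : V) : Set V := {w | T.arc w v}

/-- Arc neighborhood `N(uv)` of an arc `u → v`: vertices forming a directed
triangle with the arc. -/
def arcNbhd (T : Tournament V) (u v : V) : Set V := {w | T.arc v w ∧ T.arc w u}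

/-- `T.ColorableOn S k` means the induced subtournament `T[S]` can be partitioned
into at most `k` transitive sets. -/
def ColorableOn (T : Tournament V) (S : Set V) (k : ℕ) : Prop :=
  ∃ f : V → ℕ, (∀ v ∈ S, f v < k) ∧ ∀ i : ℕ, T.IsTransitiveSet {v | v ∈ S ∧ f v = i}

/-- The dichromatic number of `T`: the least `k` such that `V(T)` can be
partitioned into `k` transitive sets. -/
noncomputable def dichromaticNumber (T : Tournament V) : ℕ :=
  sInf {k | T.ColorableOn Set.univ k}

/-- An arc `u → v` is heavy if `N(uv)` contains a directed triangle. -/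
def IsHeavy (T : Tournament V) (u v : V) : Prop :=
  T.arc u v ∧ ∃ a b c,
    a ∈ T.arcNbhd u v ∧ b ∈ T.arcNbhd u v ∧ c ∈ T.arcNbhd u v ∧
    T.arc a b ∧ T.arc b c ∧ T.arc c a

/-- A tournament is light if it has no heavy arc. -/
def IsLight (T : Tournament V) : Prop := ∀ u v, ¬ T.IsHeavy u v

/-- The induced subtournament `T[S]` is light: for every arc within `S`, the part
of its arc neighborhood inside `S` is transitive. -/
def LightOn (T : Tournament V) (S : Set V) : Prop :=
  ∀ u ∈ S, ∀ v ∈ S, T.arc u v → T.IsTransitiveSet (T.arcNbhd u v ∩ S)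

/-- `S` is the vertex set of a directed triangle. -/
def IsTriangle (T : Tournament V) (S : Set V) : Prop :=
  ∃ a b c, S = {a, b, c} ∧ T.arc a b ∧ T.arc b c ∧ T.arc c a

/-- `S ⇒ U`: every arc between `S` and `U` is directed from `S` to `U`. -/
def Beats (T : Tournament V) (S U : Set V) : Prop :=
  ∀ s ∈ S, ∀ u ∈ U, T.arc s u

/-- `X 0, …, X (L-1)` is a `C₃`-chain of length `L`: pairwise vertex-disjoint
directed triangles with `X i ⇒ X (i+1)`. -/
def IsC3Chain (T : Tournament V) (X : ℕ → Set V) (L : ℕ) : Prop :=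
  (∀ i < L, T.IsTriangle (X i)) ∧
  (∀ i < L, ∀ j < L, i ≠ j → Disjoint (X i) (X j)) ∧
  (∀ i, i + 1 < L → T.Beats (X i) (X (i + 1)))

/-- `v 0, …, v k` are the vertices of a shortest directed path from `v 0` to `v k`:
consecutive arcs are present, and no directed path (walk) from `v 0` to `v k`
has fewer than `k` arcs. -/
def IsShortestPath (T : Tournament V) (v : ℕ → V) (k : ℕ) : Prop :=
  (∀ i < k, T.arc (v i) (v (i + 1))) ∧
  (∀ m : ℕ, ∀ p : ℕ → V, p 0 = v 0 → p m = v k →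
    (∀ i < m, T.arc (p i) (p (i + 1))) → k ≤ m)

/-- The path decomposition `D 0, …, D (k+1)` associated to the path `v 0, …, v k`:
`D 0 = N⁺(v 0)`, `D i = N(e i) \ (D 0 ∪ ⋯ ∪ D (i-1))` for `1 ≤ i ≤ k` where
`e i` is the arc `v (i-1) → v i`, and `D (k+1) = N⁻(v k) \ (D 0 ∪ ⋯ ∪ D k)`. -/
def PathDecomp (T : Tournament V) (v : ℕ → V) (k : ℕ) (D : ℕ → Set V) : Prop :=
  D 0 = T.outN (v 0) ∧
  (∀ i, 1 ≤ i → i ≤ k → D i = T.arcNbhd (v (i - 1)) (v i) \ ⋃ j < i, D j) ∧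
  D (k + 1) = T.inN (v k) \ ⋃ j < k + 1, D j

end Tournament

theorem stmt_0 {V : Type} [Fintype V] (T : Tournament V)
    (k : ℕ) (hk : 1 ≤ k) (v : ℕ → V) (hne : v 0 ≠ v k)
    (hpath : T.IsShortestPath v k)
    (D : ℕ → Set V) (hD : T.PathDecomp v k D) :
    (⋃ i ≤ k + 1, D i) = Set.univ := by
  obtain ⟨h0, hmid, hlast⟩ := hD
  obtain ⟨harc, -⟩ := hpath
  ext w
  simp only [Set.mem_iUnion, Set.mem_univ, iff_true]
  by_cases h1 : T.arc (v 0) w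
  · exact ⟨0, Nat.zero_le _, h0 ▸ h1⟩
  by_cases h2 : T.arc w (v k)
  · by_cases h3 : w ∈ ⋃ j, ⋃ _ : j < k + 1, D j
    · simp only [Set.mem_iUnion] at h3
      obtain ⟨j, hj, hw⟩ := h3
      exact ⟨j, by omega, hw⟩
    · exact ⟨k + 1, le_refl _, hlast ▸ ⟨h2, h3⟩⟩
  -- Case 3: ¬ arc v₀ w, ¬ arc w vₖ
  have hex : ∃ j, j ≤ k ∧ T.arc (v j) w := by
    by_cases hw : w = v k
    · refine ⟨k - 1, by omega, ?_⟩
      have := harc (k - 1) (by omega)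
      rwa [show k - 1 + 1 = k by omega, ← hw] at this
    · exact ⟨k, le_refl k, (T.total (v k) w (fun h => hw h.symm)).resolve_right h2⟩
  classical
  set j := Nat.find hex with hjdef
  obtain ⟨hjk, hjarc⟩ := Nat.find_spec hex
  have hj1 : 1 ≤ j := by
    rcases Nat.eq_zero_or_pos j with h | h
    · exact absurd (h ▸ hjarc) h1
    · exact h
  have hjmin : ¬ T.arc (v (j - 1)) w := by
    have := Nat.find_min hex (show j - 1 < j by omega)
    intro hc
    exact this ⟨by omega, hc⟩
  have hwne : w ≠ v (j - 1) := by
    intro hc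
    have hp := harc (j - 1) (by omega)
    rw [show j - 1 + 1 = j by omega] at hp
    exact T.asymm _ _ hp (hc ▸ hjarc)
  have harcw : T.arc w (v (j - 1)) := (T.total w (v (j - 1)) hwne).resolve_right hjmin
  have hD : D j = T.arcNbhd (v (j - 1)) (v j) \ ⋃ i < j, D i := hmid j hj1 hjk
  by_cases h3 : w ∈ ⋃ i, ⋃ _ : i < j, D i
  · simp only [Set.mem_iUnion] at h3
    obtain ⟨i, hi, hw⟩ := h3
    exact ⟨i, by omega, hw⟩
  · exact ⟨j, by omega, hD ▸ ⟨⟨hjarc, harcw⟩, h3⟩⟩
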